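/- arXiv:1909.05832 — 3 statements merged into one kernel-verified Lean document; each statement's English description precedes it below -/
import Mathlib

section
/- (Computational Safety bound, Theorem 2.) Let η be a real number with 0 ≤ η ≤ 1, let Ξ be a positive natural number, set n = ⌈η·Ξ⌉, and let Ñ be a natural number. Let μ be the uniform probability mass function on the n-element subsets of Fin Ξ, and equip the space of functions Fin Ñ → Finset (Fin Ξ) with the Ñ-fold product of μ (independent identical selections). Then the probability of the event {f | ∃ ξ : Fin Ξ, ∀ i : Fin Ñ, ξ ∉ f i} (some chunk is checked by no verifier) is at most Ξ · (1 − η)^Ñ. -/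
open MeasureTheory

/-- Finsets of `Fin Ξ` form a finite discrete type; use the discrete σ-algebra. -/
instance (Ξ : ℕ) : MeasurableSpace (Finset (Fin Ξ)) := ⊤

/-- Computational Safety bound (Theorem 2): with `n = ⌈η·Ξ⌉` and `μ` the uniform
distribution on `n`-element subsets of `Fin Ξ`, under the `N`-fold product of `μ`
(independent identical selections by the `N` honest verifiers), the probability that some
chunk is checked by no verifier is at most `Ξ · (1 - η)^N`. (`N` plays the role of `Ñ`.) -/
theorem stmt_7 (η : ℝ) (hη0 : 0 ≤ η) (hη1 : η ≤ 1) (Ξ : ℕ) (hΞ : 0 < Ξ)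
    (n : ℕ) (hn : n = ⌈η * (Ξ : ℝ)⌉₊) (N : ℕ) :
    Measure.pi (fun _ : Fin N =>
        (PMF.uniformOfFinset ((Finset.univ : Finset (Fin Ξ)).powersetCard n)
          (Finset.powersetCard_nonempty.2 (by
            simp only [Finset.card_univ, Fintype.card_fin, hn]
            exact_mod_cast Nat.ceil_le.2 (by
              calc η * (Ξ : ℝ) ≤ 1 * (Ξ : ℝ) := by
                    exact mul_le_mul_of_nonneg_right hη1 (by positivity)
                _ = (Ξ : ℝ) := one_mul _)))).toMeasure)
      {f : Fin N → Finset (Fin Ξ) | ∃ ξ : Fin Ξ, ∀ i : Fin N, ξ ∉ f i}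
      ≤ (Ξ : ENNReal) * (ENNReal.ofReal (1 - η)) ^ N := by
  have hle : η * (Ξ : ℝ) ≤ (n : ℝ) := hn ▸ Nat.le_ceil _
  have hΞR : (0:ℝ) < (Ξ : ℝ) := by exact_mod_cast hΞ
  have hnΞ : n ≤ Ξ := by
    rw [hn]
    exact Nat.ceil_le.2 (by nlinarith)
  have main : ∀ (hne : ((Finset.univ : Finset (Fin Ξ)).powersetCard n).Nonempty),
      Measure.pi (fun _ : Fin N =>
          (PMF.uniformOfFinset ((Finset.univ : Finset (Fin Ξ)).powersetCard n) hne).toMeasure)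
        {f : Fin N → Finset (Fin Ξ) | ∃ ξ : Fin Ξ, ∀ i : Fin N, ξ ∉ f i}
        ≤ (Ξ : ENNReal) * (ENNReal.ofReal (1 - η)) ^ N := by
    intro hne
    set μ : Measure (Finset (Fin Ξ)) :=
      (PMF.uniformOfFinset ((Finset.univ : Finset (Fin Ξ)).powersetCard n) hne).toMeasure with hμdef
    -- single-verifier bound
    have single : ∀ ξ : Fin Ξ, μ {s : Finset (Fin Ξ) | ξ ∉ s} ≤ ENNReal.ofReal (1 - η) := by
      intro ξ
      have hmeas : MeasurableSet {s : Finset (Fin Ξ) | ξ ∉ s} := trivial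
      rw [hμdef, PMF.toMeasure_uniformOfFinset_apply hne _ hmeas]
      have hfilter : ((Finset.univ : Finset (Fin Ξ)).powersetCard n).filter
          (· ∈ {s : Finset (Fin Ξ) | ξ ∉ s})
          = ((Finset.univ : Finset (Fin Ξ)).erase ξ).powersetCard n := by
        ext t
        simp only [Finset.mem_filter, Finset.mem_powersetCard, Finset.subset_erase,
          Set.mem_setOf_eq, Finset.subset_univ, true_and]
        tauto
      rw [Finset.filter_congr_decidable, hfilter, Finset.card_powersetCard, Finset.card_powersetCard, Finset.card_erase_of_mem
        (Finset.mem_univ ξ), Finset.card_univ, Fintype.card_fin]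
      -- now: ((Ξ-1).choose n : ENNReal) / (Ξ.choose n) ≤ ofReal (1 - η)
      have hC0 : 0 < Ξ.choose n := Nat.choose_pos hnΞ
      have hreal : ((Ξ - 1).choose n : ℝ) ≤ (1 - η) * (Ξ.choose n : ℝ) := by
        have hid : (Ξ - 1).choose n * Ξ = Ξ.choose n * (Ξ - n) := by
          have := Nat.choose_mul_succ_eq (Ξ - 1) n
          rwa [Nat.sub_add_cancel hΞ] at this
        have hidR : ((Ξ - 1).choose n : ℝ) * (Ξ : ℝ)
            = (Ξ.choose n : ℝ) * ((Ξ : ℝ) - (n : ℝ)) := by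
          have := congrArg (fun k : ℕ => (k : ℝ)) hid
          push_cast [Nat.cast_sub hnΞ] at this
          linarith
        have hCpos : (0:ℝ) < (Ξ.choose n : ℝ) := by exact_mod_cast hC0
        nlinarith
      calc ((Ξ - 1).choose n : ENNReal) / (Ξ.choose n : ENNReal)
          ≤ (ENNReal.ofReal (1 - η) * (Ξ.choose n : ENNReal)) / (Ξ.choose n : ENNReal) := by
            apply ENNReal.div_le_div_right
            rw [← ENNReal.ofReal_natCast ((Ξ - 1).choose n), ← ENNReal.ofReal_natCast (Ξ.choose n),
              ← ENNReal.ofReal_mul (by linarith)]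
            exact ENNReal.ofReal_le_ofReal hreal
        _ = ENNReal.ofReal (1 - η) := by
            rw [mul_div_assoc, ENNReal.div_self (by exact_mod_cast hC0.ne')
              (ENNReal.natCast_ne_top _), mul_one]
    -- union bound
    have hset : {f : Fin N → Finset (Fin Ξ) | ∃ ξ : Fin Ξ, ∀ i : Fin N, ξ ∉ f i}
        = ⋃ ξ : Fin Ξ, Set.pi Set.univ (fun _ : Fin N => {s : Finset (Fin Ξ) | ξ ∉ s}) := by
      ext f
      simp [Set.mem_pi]
    rw [hset]
    refine le_trans (measure_iUnion_le _) ?_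
    have hterm : ∀ ξ : Fin Ξ,
        Measure.pi (fun _ : Fin N => μ)
          (Set.pi Set.univ (fun _ : Fin N => {s : Finset (Fin Ξ) | ξ ∉ s}))
        ≤ (ENNReal.ofReal (1 - η)) ^ N := by
      intro ξ
      rw [Measure.pi_pi]
      calc ∏ _i : Fin N, μ {s : Finset (Fin Ξ) | ξ ∉ s}
          ≤ ∏ _i : Fin N, ENNReal.ofReal (1 - η) :=
            Finset.prod_le_prod' fun i _ => single ξ
        _ = (ENNReal.ofReal (1 - η)) ^ N := by
            rw [Finset.prod_const, Finset.card_univ, Fintype.card_fin]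
    calc ∑' ξ : Fin Ξ, Measure.pi (fun _ : Fin N => μ)
          (Set.pi Set.univ (fun _ : Fin N => {s : Finset (Fin Ξ) | ξ ∉ s}))
        ≤ ∑' _ξ : Fin Ξ, (ENNReal.ofReal (1 - η)) ^ N := ENNReal.tsum_le_tsum hterm
      _ = (Ξ : ENNReal) * (ENNReal.ofReal (1 - η)) ^ N := by
          rw [tsum_fintype, Finset.sum_const, Finset.card_univ, Fintype.card_fin, nsmul_eq_mul]
  exact main _
end

section
/- Let Γ_Tx and Γ_chunk be real numbers with 0 < Γ_Tx ≤ Γ_chunk, and let T be a list of real numbers (transaction computation consumptions) with 0 < T[i] ≤ Γ_Tx for every i. Then T can be partitioned into a concatenation of contiguous nonempty sublists (chunks) C_1, …, C_m such that: (i) the sum of each chunk C_j is at most Γ_chunk, and (ii) for every j < m (i.e., every chunk except possibly the last), the sum of C_j plus the first element of C_{j+1} exceeds Γ_chunk; in particular, the sum of each chunk C_j with j < m exceeds Γ_chunk − Γ_Tx. -/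
open Classical in
lemma chunk_aux (ΓTx Γchunk : ℝ) (hΓ0 : 0 < ΓTx) (hΓ : ΓTx ≤ Γchunk) :
    ∀ (n : ℕ) (T : List ℝ), T.length ≤ n → (∀ x ∈ T, 0 < x ∧ x ≤ ΓTx) →
    ∃ C : List (List ℝ),
      C.flatten = T ∧ (∀ c ∈ C, c ≠ []) ∧ (∀ c ∈ C, c.sum ≤ Γchunk) ∧
      (∀ j : ℕ, j + 1 < C.length →
          Γchunk < (C.getD j []).sum + (C.getD (j + 1) []).headI) := by
  intro n
  induction n with
  | zero =>
    intro T hlen _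
    refine ⟨[], ?_, by simp, by simp, by simp⟩
    simpa using (List.length_eq_zero_iff.mp (Nat.le_zero.mp hlen))
  | succ n ih =>
    intro T hlen hT
    rcases T.eq_nil_or_concat.symm with h | rfl
    swap
    · exact ⟨[], by simp, by simp, by simp, by simp⟩
    have hTne : T ≠ [] := by
      rcases h with ⟨l, a, rfl⟩; simp
    have hlen1 : 1 ≤ T.length := List.length_pos_iff.mpr hTne
    set P : ℕ → Prop := fun m => (T.take m).sum ≤ Γchunk with hP
    have hP1 : P 1 := by
      rcases List.exists_cons_of_ne_nil hTne with ⟨a, l, rfl⟩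
      have := hT a (by simp)
      simpa [P] using le_trans this.2 hΓ
    set k := Nat.findGreatest P T.length with hk
    have hk1 : 1 ≤ k := Nat.le_findGreatest hlen1 hP1
    have hkle : k ≤ T.length := Nat.findGreatest_le _
    have hPk : P k := Nat.findGreatest_spec hlen1 hP1
    set c := T.take k with hc
    set R := T.drop k with hR
    have hRlen : R.length ≤ n := by
      have : R.length = T.length - k := by simp [hR]
      omega
    have hRsub : ∀ x ∈ R, 0 < x ∧ x ≤ ΓTx := fun x hx => hT x (List.mem_of_mem_drop hx)
    obtain ⟨C', hflat, hne, hsum, hnext⟩ := ih R hRlen hRsub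
    refine ⟨c :: C', ?_, ?_, ?_, ?_⟩
    · simp [hc, hflat, hR]
    · intro d hd
      rcases List.mem_cons.mp hd with rfl | hd
      · intro h
        have h2 : (List.take k T).length = 0 := by rw [← hc, h]; simp
        rw [List.length_take] at h2
        omega
      · exact hne d hd
    · intro d hd
      rcases List.mem_cons.mp hd with rfl | hd
      · exact hPk
      · exact hsum d hd
    · intro j hj
      cases j with
      | succ j =>
        have := hnext j (by simpa using hj)
        simpa using this
      | zero =>
        -- need Γchunk < c.sum + (C'.getD 0 []).headI
        have hC'len : 1 ≤ C'.length := Nat.succ_le_of_lt (by simpa using hj)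
        rcases List.exists_cons_of_ne_nil (List.length_pos_iff.mp hC'len) with ⟨c0, rest, hC'⟩
        have hklt : k < T.length := by
          rcases lt_or_eq_of_le hkle with h' | h'
          · exact h'
          · exfalso
            have hR0 : R = [] := by simp [hR, h']
            rw [hR0] at hflat
            cases C' with
            | nil => simp at hC'len
            | cons a l =>
              obtain ⟨ha, -⟩ : a = [] ∧ ∀ x ∈ l, x = [] := by simpa using hflat
              exact hne a (by simp) ha
        have hnP : ¬ P (k + 1) := by
          have := Nat.findGreatest_is_greatest (show k < k + 1 by omega) (by omega)
          simpa [hk] using this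
        have hsucc : (T.take (k+1)).sum = (T.take k).sum + T.get ⟨k, hklt⟩ := by
          exact List.sum_take_succ T k hklt
        have hRcons : R = T.get ⟨k, hklt⟩ :: T.drop (k+1) := by
          rw [hR]; exact List.drop_eq_getElem_cons hklt
        have hc0ne : c0 ≠ [] := hne c0 (by simp [hC'])
        have hhead : (C'.getD 0 []).headI = T.get ⟨k, hklt⟩ := by
          have : C'.flatten = c0 ++ rest.flatten := by simp [hC']
          rw [this] at hflat
          have h1 : (c0 ++ rest.flatten).headI = c0.headI := by
            rcases List.exists_cons_of_ne_nil hc0ne with ⟨a, l, rfl⟩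
            simp
          rw [hC']
          simp only [List.getD_cons_zero]
          rw [← h1, hflat, hRcons, List.headI_cons]
        simp only [List.getD_cons_zero, List.getD_cons_succ]
        rw [hhead]
        have := not_le.mp hnP
        calc Γchunk < (T.take (k+1)).sum := not_le.mp (by simpa [P] using hnP)
          _ = c.sum + T.get ⟨k, hklt⟩ := by rw [hsucc, hc]

/-- Flow's Chunking Algorithm: a list `T` of transaction computation consumptions, each in
`(0, Γ_Tx]` with `0 < Γ_Tx ≤ Γ_chunk`, can be partitioned into a concatenation of contiguous
nonempty chunks `C_1, …, C_m` such that (i) each chunk's sum is at most `Γ_chunk`, and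
(ii) for every chunk except the last, its sum plus the first element of the next chunk
exceeds `Γ_chunk`; in particular each such chunk's sum exceeds `Γ_chunk - Γ_Tx`. -/
theorem stmt_9 (ΓTx Γchunk : ℝ) (hΓ0 : 0 < ΓTx) (hΓ : ΓTx ≤ Γchunk)
    (T : List ℝ) (hT : ∀ x ∈ T, 0 < x ∧ x ≤ ΓTx) :
    ∃ C : List (List ℝ),
      C.flatten = T
      ∧ (∀ c ∈ C, c ≠ [])
      ∧ (∀ c ∈ C, c.sum ≤ Γchunk)
      ∧ (∀ j : ℕ, j + 1 < C.length →
          Γchunk < (C.getD j []).sum + (C.getD (j + 1) []).headI)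
      ∧ (∀ j : ℕ, j + 1 < C.length → Γchunk - ΓTx < (C.getD j []).sum) := by
  obtain ⟨C, h1, h2, h3, h4⟩ := chunk_aux ΓTx Γchunk hΓ0 hΓ T.length T le_rfl hT
  refine ⟨C, h1, h2, h3, h4, ?_⟩
  intro j hj
  have hmem : C.getD (j+1) [] ∈ C := by
    rw [List.getD_eq_getElem _ _ hj]
    exact List.getElem_mem hj
  have hne := h2 _ hmem
  have hhead : (C.getD (j+1) []).headI ∈ C.getD (j+1) [] := by
    rcases List.exists_cons_of_ne_nil hne with ⟨a, l, he⟩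
    rw [he]; simp
  have hinT : (C.getD (j+1) []).headI ∈ T := by
    rw [← h1]
    exact List.mem_flatten.mpr ⟨_, hmem, hhead⟩
  have := (hT _ hinT).2
  have h4j := h4 j hj
  linarith
end

section
/- Let n ≥ 1 be a natural number, let Γ_Tx > 0 be real, and set Γ_chunk = n · Γ_Tx. Suppose a list of real numbers, each in (0, Γ_Tx], is partitioned greedily into contiguous chunks so that each chunk's sum is at most Γ_chunk and no further element can be appended to any chunk except the last without exceeding Γ_chunk. Then every chunk except possibly the last has sum c satisfying (1 − 1/n) · Γ_chunk < c ≤ Γ_chunk. -/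
/-- Given `Γ_chunk = n · Γ_Tx` (`n ≥ 1`), if a list of reals in `(0, Γ_Tx]` is partitioned
greedily into contiguous nonempty chunks — each chunk's sum at most `Γ_chunk`, and no
further element can be appended to any chunk except the last without exceeding `Γ_chunk` —
then every chunk except possibly the last has sum `c` with
`(1 - 1/n) · Γ_chunk < c ≤ Γ_chunk`. -/
theorem stmt_10 (n : ℕ) (hn : 1 ≤ n) (ΓTx : ℝ) (hΓ0 : 0 < ΓTx)
    (Γchunk : ℝ) (hΓc : Γchunk = (n : ℝ) * ΓTx)
    (T : List ℝ) (hT : ∀ x ∈ T, 0 < x ∧ x ≤ ΓTx)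
    (C : List (List ℝ)) (hjoin : C.flatten = T) (hne : ∀ c ∈ C, c ≠ [])
    (hle : ∀ c ∈ C, c.sum ≤ Γchunk)
    (hgreedy : ∀ j : ℕ, j + 1 < C.length →
        Γchunk < (C.getD j []).sum + (C.getD (j + 1) []).headI) :
    ∀ j : ℕ, j + 1 < C.length →
      (1 - 1 / (n : ℝ)) * Γchunk < (C.getD j []).sum
      ∧ (C.getD j []).sum ≤ Γchunk := by
  intro j hj
  have hjlt : j < C.length := Nat.lt_of_succ_lt hj
  have hmemj : C.getD j [] ∈ C := by
    rw [List.getD_eq_getElem _ _ hjlt]; exact List.getElem_mem _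
  have hmemj1 : C.getD (j+1) [] ∈ C := by
    rw [List.getD_eq_getElem _ _ hj]; exact List.getElem_mem _
  have hne1 : C.getD (j+1) [] ≠ [] := hne _ hmemj1
  have hheadmem : (C.getD (j+1) []).headI ∈ T := by
    rw [← hjoin]
    obtain ⟨a, l, h⟩ := List.exists_cons_of_ne_nil hne1
    rw [h]
    exact List.mem_flatten.2 ⟨_, h ▸ hmemj1, List.mem_cons_self⟩
  have hhead : (C.getD (j+1) []).headI ≤ ΓTx := (hT _ hheadmem).2
  have hg := hgreedy j hj
  have hnpos : (0:ℝ) < n := by exact_mod_cast hn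
  constructor
  · have : (1 - 1 / (n:ℝ)) * Γchunk = Γchunk - ΓTx := by
      rw [hΓc]; field_simp
    rw [this]
    linarith
  · exact hle _ hmemj
end
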